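/- Let N and K be positive integers, let w_1, …, w_K and h̃ be vectors in ℂ^N, let γ ≥ 0, σ² ≥ 0, δ ≥ 0, fix k ∈ {1, …, K}, and set ε = δ² + 2δ‖h̃‖. If |w_k†h̃|² − ε‖w_k‖² − γ·Σ_{i≠k} ( |w_i†h̃|² + ε‖w_i‖² ) ≥ σ²γ, then for every h ∈ ℂ^N with ‖h − h̃‖ ≤ δ one has |w_k†h|² ≥ γ·(σ² + Σ_{i≠k} |w_i†h|²); that is, the strictly bounded (SBCS) constraint guarantees the SINR constraint for every channel realization in the uncertainty ball. -/

import Mathlib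

open BigOperators Finset

/-- The Euclidean norm of a complex vector. -/
noncomputable def vnorm {N : ℕ} (v : Fin N → ℂ) : ℝ :=
  Real.sqrt (∑ i, ‖v i‖ ^ 2)

/-- The standard inner product `u† v` of two complex vectors. -/
noncomputable def dotc {N : ℕ} (u v : Fin N → ℂ) : ℂ :=
  ∑ i, star (u i) * v i

noncomputable def toE {N : ℕ} (v : Fin N → ℂ) : EuclideanSpace ℂ (Fin N) :=
  (WithLp.equiv 2 _).symm v

lemma vnorm_eq {N : ℕ} (v : Fin N → ℂ) : vnorm v = ‖toE v‖ := by
  rw [EuclideanSpace.norm_eq]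
  simp [vnorm, toE]

lemma dotc_eq {N : ℕ} (u v : Fin N → ℂ) : dotc u v = inner ℂ (toE u) (toE v) := by
  simp [dotc, toE, PiLp.inner_apply, RCLike.inner_apply, mul_comm]

lemma dotc_abs_le {N : ℕ} (u v : Fin N → ℂ) :
    ‖dotc u v‖ ≤ vnorm u * vnorm v := by
  rw [dotc_eq, vnorm_eq, vnorm_eq]
  exact norm_inner_le_norm _ _

lemma vnorm_nonneg {N : ℕ} (v : Fin N → ℂ) : 0 ≤ vnorm v := Real.sqrt_nonneg _

lemma dotc_sub {N : ℕ} (u h h' : Fin N → ℂ) : dotc u h = dotc u h' + dotc u (h - h') := by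
  simp [dotc, ← Finset.sum_add_distrib, mul_sub, Pi.sub_apply]

lemma key (a b wn d hn : ℝ) (ha : 0 ≤ a) (hb : 0 ≤ b) (hwn : 0 ≤ wn) (hd : 0 ≤ d)
    (hhn : 0 ≤ hn)
    (h1 : b ≤ a + wn * d) (h2 : a ≤ b + wn * d) (h3 : a ≤ wn * hn) :
    a ^ 2 - (d ^ 2 + 2 * d * hn) * wn ^ 2 ≤ b ^ 2 ∧
      b ^ 2 ≤ a ^ 2 + (d ^ 2 + 2 * d * hn) * wn ^ 2 := by
  constructor <;>
    nlinarith [mul_nonneg hd hwn, mul_nonneg hb (mul_nonneg hwn hd),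
      sq_nonneg (wn * d), mul_nonneg ha (mul_nonneg hwn hd),
      mul_nonneg (mul_nonneg hd hwn) (mul_nonneg hwn hhn)]

lemma bounds {N : ℕ} (u h h' : Fin N → ℂ) (δ : ℝ) (hd : 0 ≤ δ)
    (hball : vnorm (h - h') ≤ δ) :
    ‖dotc u h'‖ ^ 2 - (δ ^ 2 + 2 * δ * vnorm h') * vnorm u ^ 2
        ≤ ‖dotc u h‖ ^ 2 ∧
      ‖dotc u h‖ ^ 2
        ≤ ‖dotc u h'‖ ^ 2 + (δ ^ 2 + 2 * δ * vnorm h') * vnorm u ^ 2 := by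
  have hCS := dotc_abs_le u (h - h')
  have hwd : ‖dotc u (h - h')‖ ≤ vnorm u * δ :=
    hCS.trans (by exact mul_le_mul_of_nonneg_left hball (vnorm_nonneg u))
  have h1 : ‖dotc u h‖ ≤ ‖dotc u h'‖ + vnorm u * δ := by
    calc ‖dotc u h‖ = ‖dotc u h' + dotc u (h - h')‖ := by
          rw [← dotc_sub]
      _ ≤ ‖dotc u h'‖ + ‖dotc u (h - h')‖ := by
          exact norm_add_le _ _
      _ ≤ _ := by linarith
  have h2 : ‖dotc u h'‖ ≤ ‖dotc u h‖ + vnorm u * δ := by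
    have : ‖dotc u h'‖ ≤ ‖dotc u h‖ + ‖dotc u (h - h')‖ := by
      calc ‖dotc u h'‖ = ‖dotc u h - dotc u (h - h')‖ := by
            rw [dotc_sub u h h']; ring_nf
        _ ≤ _ := by simpa using norm_sub_le (dotc u h) (dotc u (h - h'))
    linarith
  exact key _ _ _ _ _ (norm_nonneg _) (norm_nonneg _) (vnorm_nonneg u) hd
    (vnorm_nonneg h') h1 h2 (dotc_abs_le u h')

theorem stmt12 (N K : ℕ) (hN : 0 < N) (hK : 0 < K)
    (w : Fin K → Fin N → ℂ) (h' : Fin N → ℂ)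
    (γ : ℝ) (hγ : 0 ≤ γ) (σsq : ℝ) (hσ : 0 ≤ σsq) (δ : ℝ) (hδ : 0 ≤ δ)
    (k : Fin K)
    (ε : ℝ) (hε : ε = δ ^ 2 + 2 * δ * vnorm h')
    (hSBCS : ‖dotc (w k) h'‖ ^ 2 - ε * vnorm (w k) ^ 2
        - γ * ∑ i ∈ Finset.univ.erase k,
            (‖dotc (w i) h'‖ ^ 2 + ε * vnorm (w i) ^ 2)
        ≥ σsq * γ) :
    ∀ h : Fin N → ℂ, vnorm (h - h') ≤ δ →
      ‖dotc (w k) h‖ ^ 2 ≥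
        γ * (σsq + ∑ i ∈ Finset.univ.erase k, ‖dotc (w i) h‖ ^ 2) := by
  intro h hball
  subst hε
  have Hk := (bounds (w k) h h' δ hδ hball).1
  have hsum : (∑ i ∈ Finset.univ.erase k, ‖dotc (w i) h‖ ^ 2)
      ≤ ∑ i ∈ Finset.univ.erase k,
          (‖dotc (w i) h'‖ ^ 2 + (δ ^ 2 + 2 * δ * vnorm h') * vnorm (w i) ^ 2) :=
    Finset.sum_le_sum fun i _ => (bounds (w i) h h' δ hδ hball).2
  nlinarith [mul_le_mul_of_nonneg_left hsum hγ]
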